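/- For every real η ∈ (0,1) and every t with −1 ≤ t, the inequality (1+t)^{1+η} ≤ 1 + (1+η)t + |t|^{1+η} holds. -/

import Mathlib

open Real Set
open scoped NNReal

private lemma one_add_rpow_le {q x : ℝ} (hq0 : 0 ≤ q) (hq1 : q ≤ 1) (hx : 0 ≤ x) :
    (1 + x) ^ q ≤ 1 + x ^ q := by
  have h := NNReal.rpow_add_le_add_rpow 1 x.toNNReal hq0 hq1
  have h' : (((1 + x.toNNReal : ℝ≥0) : ℝ)) ^ q ≤ ((1 ^ q + x.toNNReal ^ q : ℝ≥0) : ℝ) := by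
    rw [← NNReal.coe_rpow]; exact_mod_cast h
  simpa [NNReal.coe_rpow, Real.coe_toNNReal x hx] using h'

private lemma keyA {p : ℝ} (hp : 1 ≤ p) (hp2 : p ≤ 2) :
    ∀ t : ℝ, 0 ≤ t → (1 + t) ^ p ≤ 1 + p * t + t ^ p := by
  have hppos : 0 < p := lt_of_lt_of_le one_pos hp
  set f : ℝ → ℝ := fun x => 1 + p * x + x ^ p - (1 + x) ^ p with hf
  have hderiv : ∀ x : ℝ,
      HasDerivAt f (p + p * x ^ (p - 1) - p * (1 + x) ^ (p - 1)) x := by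
    intro x
    have h1 : HasDerivAt (fun y : ℝ => y ^ p) (p * x ^ (p - 1)) x :=
      Real.hasDerivAt_rpow_const (Or.inr hp)
    have h2 : HasDerivAt (fun y : ℝ => (1 + y) ^ p) (p * (1 + x) ^ (p - 1)) x := by
      have := (Real.hasDerivAt_rpow_const (x := 1 + x) (p := p) (Or.inr hp)).comp x
        ((hasDerivAt_id x).const_add 1)
      simpa [Function.comp_def] using this
    have h0 : HasDerivAt (fun y : ℝ => 1 + p * y) p x := by
      simpa using ((hasDerivAt_id x).const_mul p).const_add 1
    exact (h0.add h1).sub h2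
  have hdiff : Differentiable ℝ f := fun x => (hderiv x).differentiableAt
  have hmono : MonotoneOn f (Ici (0:ℝ)) := by
    apply monotoneOn_of_deriv_nonneg (convex_Ici 0) hdiff.continuous.continuousOn
      (hdiff.differentiableOn)
    intro x hx
    rw [interior_Ici] at hx
    have hx0 : (0:ℝ) < x := hx
    rw [(hderiv x).deriv]
    have hsub : (1 + x) ^ (p - 1) ≤ 1 + x ^ (p - 1) :=
      one_add_rpow_le (by linarith) (by linarith) hx0.le
    nlinarith [Real.rpow_nonneg hx0.le (p - 1)]
  intro t ht
  have h := hmono (self_mem_Ici) (mem_Ici.mpr ht) ht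
  have hf0 : f 0 = 0 := by
    simp [hf, Real.zero_rpow hppos.ne']
  rw [hf0] at h
  simp only [hf] at h
  linarith

private lemma keyB {p : ℝ} (hp : 1 ≤ p) (hp2 : p ≤ 2) :
    ∀ s : ℝ, 0 ≤ s → s ≤ 1 → (1 - s) ^ p ≤ 1 - p * s + s ^ p := by
  have hppos : 0 < p := lt_of_lt_of_le one_pos hp
  set g : ℝ → ℝ := fun x => 1 - p * x + x ^ p - (1 - x) ^ p with hg
  have hderiv : ∀ x : ℝ,
      HasDerivAt g (-p + p * x ^ (p - 1) + p * (1 - x) ^ (p - 1)) x := by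
    intro x
    have h1 : HasDerivAt (fun y : ℝ => y ^ p) (p * x ^ (p - 1)) x :=
      Real.hasDerivAt_rpow_const (Or.inr hp)
    have h2 : HasDerivAt (fun y : ℝ => (1 - y) ^ p) (p * (1 - x) ^ (p - 1) * (-1)) x := by
      have := (Real.hasDerivAt_rpow_const (x := 1 - x) (p := p) (Or.inr hp)).comp x
        ((hasDerivAt_id x).neg.const_add 1)
      simpa [sub_eq_add_neg, Function.comp_def] using this
    have h0 : HasDerivAt (fun y : ℝ => 1 - p * y) (-p) x := by
      simpa using ((hasDerivAt_id x).const_mul p).const_sub 1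
    have := (h0.add h1).sub h2
    exact this.congr_deriv (by ring)
  have hdiff : Differentiable ℝ g := fun x => (hderiv x).differentiableAt
  have hmono : MonotoneOn g (Icc (0:ℝ) 1) := by
    apply monotoneOn_of_deriv_nonneg (convex_Icc 0 1) hdiff.continuous.continuousOn
      (hdiff.differentiableOn)
    intro x hx
    rw [interior_Icc] at hx
    obtain ⟨hx0, hx1⟩ := hx
    rw [(hderiv x).deriv]
    have e1 : x ^ (1:ℝ) ≤ x ^ (p - 1) :=
      Real.rpow_le_rpow_of_exponent_ge hx0 hx1.le (by linarith)
    have e2 : (1 - x) ^ (1:ℝ) ≤ (1 - x) ^ (p - 1) :=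
      Real.rpow_le_rpow_of_exponent_ge (by linarith) (by linarith) (by linarith)
    rw [Real.rpow_one] at e1 e2
    nlinarith
  intro s hs0 hs1
  have h := hmono (left_mem_Icc.mpr zero_le_one) (mem_Icc.mpr ⟨hs0, hs1⟩) hs0
  have hg0 : g 0 = 0 := by
    simp [hg, Real.zero_rpow hppos.ne']
  rw [hg0] at h
  simp only [hg] at h
  linarith

theorem stmt2 : ∀ η ∈ Set.Ioo (0:ℝ) 1, ∀ t : ℝ, -1 ≤ t →
    (1 + t) ^ (1 + η) ≤ 1 + (1 + η) * t + |t| ^ (1 + η) := by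
  intro η hη t ht
  obtain ⟨hη0, hη1⟩ := hη
  set p := 1 + η with hpdef
  have hp : 1 ≤ p := by linarith
  have hp2 : p ≤ 2 := by linarith
  rcases le_or_gt 0 t with h | h
  · rw [abs_of_nonneg h]
    exact keyA hp hp2 t h
  · rw [abs_of_neg h]
    have := keyB hp hp2 (-t) (by linarith) (by linarith)
    have e : 1 - -t = 1 + t := by ring
    rw [e] at this
    linarith
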